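/- Let m ≥ 3, n = 3·2^m, and S̄ = {1, 2, 4, …, 2^m, 2^m − 1} (powers of 2 up to 2^m together with 2^m − 1). Let G = C_n(S) where S = {1,…,n/2} \ S̄. Then the independence complex Δ of G is pure of dimension 2. -/

import Mathlib

/-- The "reduced absolute value" |x|_n = min(x mod n, n - x mod n). -/
def redAbs (n : ℕ) (x : ZMod n) : ℕ := min x.val (n - x.val)

/-- The circulant graph C_n(S). -/
def circulant (n : ℕ) (S : Finset ℕ) : SimpleGraph (ZMod n) :=
  SimpleGraph.fromRel (fun i j => redAbs n (j - i) ∈ S)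

/-- `s` is an independent set of C_n(S). -/
def IsIndep {n : ℕ} (S : Finset ℕ) (s : Finset (ZMod n)) : Prop :=
  ∀ x ∈ s, ∀ y ∈ s, x ≠ y → ¬ (circulant n S).Adj x y

/-- `s` is a maximal independent set of C_n(S). -/
def IsMaxIndep {n : ℕ} (S : Finset ℕ) (s : Finset (ZMod n)) : Prop :=
  IsIndep S s ∧ ∀ t : Finset (ZMod n), IsIndep S t → s ⊆ t → t = s

/-- The complement generating set S̄ = {1,…,⌊n/2⌋} \ S. -/
def Sbar (n : ℕ) (S : Finset ℕ) : Finset ℕ := Finset.Icc 1 (n / 2) \ S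

namespace PFaux

def sbp (m k : ℕ) : Prop := (∃ i, i ≤ m ∧ k = 2^i) ∨ k = 2^m - 1

def Fp (m k : ℕ) : Prop := sbp m k ∨ sbp m (3 * 2^m - k)

lemma pow_le_pow_m {i m : ℕ} (h : i ≤ m) : (2:ℕ)^i ≤ 2^m := Nat.pow_le_pow_right (by norm_num) h

lemma h8 {m : ℕ} (hm : 3 ≤ m) : 8 ≤ 2^m := by
  have : (2:ℕ)^3 ≤ 2^m := pow_le_pow_m hm
  norm_num at this; omega

lemma sbp_pos {m k : ℕ} (hm : 3 ≤ m) (h : sbp m k) : 1 ≤ k ∧ k ≤ 2^m := by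
  have := h8 hm
  rcases h with ⟨i, hi, rfl⟩ | rfl
  · exact ⟨Nat.one_le_two_pow, pow_le_pow_m hi⟩
  · omega

lemma pow_inj {i j : ℕ} (h : (2:ℕ)^i = 2^j) : i = j := Nat.pow_right_injective (le_refl 2) h

lemma pow_split1 {i : ℕ} (h : 1 ≤ i) : (2:ℕ)^i = 2 * 2^(i-1) := by
  rw [← pow_succ']; congr 1; omega

lemma pow_split2 {i : ℕ} (h : 2 ≤ i) : (2:ℕ)^i = 4 * 2^(i-2) := by
  have : (4:ℕ) = 2^2 := rfl
  rw [this, ← pow_add]; congr 1; omega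

lemma A2 {i j k : ℕ} (h : (2:ℕ)^i + 2^j = 2^k) : i = j ∧ k = i + 1 := by
  have key : ∀ a b, (2:ℕ)^a + 2^b = 2^k → a < b → False := by
    intro i j h hlt
    have hik : i < k := by
      have h1 : (2:ℕ)^i < 2^k := by have := pow_pos (show (0:ℕ) < 2 by norm_num) j; omega
      exact (Nat.pow_lt_pow_iff_right (by norm_num)).mp h1
    have d1 : (2:ℕ)^(i+1) ∣ 2^j := pow_dvd_pow 2 (by omega)
    have d2 : (2:ℕ)^(i+1) ∣ 2^k := pow_dvd_pow 2 (by omega)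
    have d3 : (2:ℕ)^(i+1) ∣ 2^i := by
      have : (2:ℕ)^i = 2^k - 2^j := by omega
      rw [this]; exact Nat.dvd_sub d2 d1
    have := Nat.le_of_dvd (pow_pos (show (0:ℕ) < 2 by norm_num) i) d3
    have := pow_split1 (show 1 ≤ i+1 by omega)
    simp only [Nat.add_sub_cancel] at this
    have := pow_pos (show (0:ℕ) < 2 by norm_num) i
    omega
  have hij : i = j := by
    rcases lt_trichotomy i j with hlt | heq | hgt
    · exact absurd hlt (by intro hh; exact key i j h hh)
    · exact heq
    · exact absurd hgt (by intro hh; exact key j i (by omega) hh)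
  subst hij
  have : (2:ℕ)^(i+1) = 2^k := by rw [pow_succ]; omega
  exact ⟨rfl, (pow_inj this).symm⟩

lemma A3 {i k : ℕ} : 3 * 2^i ≠ (2:ℕ)^k := by
  intro h
  rcases le_or_gt k i with hk | hk
  · have h1 := pow_le_pow_m hk
    have := pow_pos (show (0:ℕ) < 2 by norm_num) i
    omega
  · have h1 : (2:ℕ)^k = 2^i * 2^(k-i) := by rw [← pow_add]; congr 1; omega
    have hp : 0 < (2:ℕ)^i := pow_pos (show (0:ℕ) < 2 by norm_num) i
    have h2 : (2:ℕ)^(k-i) = 3 := by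
      have : (2:ℕ)^i * 3 = 2^i * 2^(k-i) := by omega
      exact (Nat.eq_of_mul_eq_mul_left hp this).symm
    rcases Nat.lt_or_ge (k-i) 2 with h3 | h3
    · have hd : k - i = 0 ∨ k - i = 1 := by omega
      rcases hd with hd | hd <;> rw [hd] at h2 <;> norm_num at h2
    · have : (2:ℕ)^2 ≤ 2^(k-i) := pow_le_pow_m h3
      norm_num at this; omega

lemma A4 {i j m : ℕ} (hm : 3 ≤ m) : (2:ℕ)^i + 2^j ≠ 2^m - 1 := by
  intro h
  have hN := h8 hm
  rcases Nat.eq_zero_or_pos i with hi | hi <;> rcases Nat.eq_zero_or_pos j with hj | hj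
  · subst hi; subst hj; norm_num at h; omega
  · subst hi
    have h' : (2:ℕ)^j + 2^1 = 2^m := by norm_num at h ⊢; omega
    have := A2 h'; omega
  · subst hj
    have h' : (2:ℕ)^i + 2^1 = 2^m := by norm_num at h ⊢; omega
    have := A2 h'; omega
  · have := pow_split1 hi
    have := pow_split1 hj
    have := pow_split1 (show 1 ≤ m by omega)
    omega

lemma A5 {i m : ℕ} (hm : 3 ≤ m) : 3 * 2^i ≠ (2:ℕ)^m - 1 := by
  intro h
  have hN := h8 hm
  rcases Nat.eq_zero_or_pos i with hi | hi
  · subst hi; norm_num at h; omega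
  · have := pow_split1 hi
    have := pow_split1 (show 1 ≤ m by omega)
    omega

lemma A6 {i k m : ℕ} (hm : 3 ≤ m) (h : (2:ℕ)^i + (2^m - 1) = 2^k) : i = 0 ∧ k = m := by
  have hN := h8 hm
  rcases Nat.eq_zero_or_pos i with hi | hi
  · subst hi
    have : (2:ℕ)^m = 2^k := by norm_num at h; omega
    exact ⟨rfl, (pow_inj this).symm⟩
  · exfalso
    rcases Nat.eq_zero_or_pos k with hk | hk
    · have := pow_split1 hi
      rw [hk] at h; norm_num at h; omega
    · have := pow_split1 hi
      have := pow_split1 hk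
      have := pow_split1 (show 1 ≤ m by omega)
      omega

lemma A8 {k m : ℕ} (hm : 3 ≤ m) : (2^m - 1) + (2^m - 1) ≠ (2:ℕ)^k := by
  intro h
  have hN := h8 hm
  rcases Nat.lt_or_ge k 2 with hk | hk
  · have : (2:ℕ)^k ≤ 2^1 := pow_le_pow_m (by omega)
    norm_num at this; omega
  · have := pow_split2 hk
    have := pow_split2 (show 2 ≤ m by omega)
    omega

lemma A10' {k t : ℕ} (ht : 2 ≤ t) : (2:ℕ)^k ≠ 2^t - 1 := by
  intro h
  have h4 : (4:ℕ) ≤ 2^t := by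
    have : (2:ℕ)^2 ≤ 2^t := pow_le_pow_m ht
    norm_num at this; omega
  rcases Nat.eq_zero_or_pos k with hk | hk
  · rw [hk] at h; norm_num at h
    have := pow_split2 ht; omega
  · have := pow_split1 hk
    have := pow_split1 (show 1 ≤ t by omega)
    omega

lemma A12 {k m : ℕ} (hm : 3 ≤ m) : (2:ℕ)^k ≠ 2^m - 2 := by
  intro h
  have hN := h8 hm
  rcases Nat.lt_or_ge k 2 with hk | hk
  · have : (2:ℕ)^k ≤ 2^1 := pow_le_pow_m (by omega)
    have := pow_split2 (show 2 ≤ m by omega)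
    norm_num at this ⊢; omega
  · have := pow_split2 hk
    have := pow_split2 (show 2 ≤ m by omega)
    omega

lemma sum2 {m a b c : ℕ} (hm : 3 ≤ m) (ha : sbp m a) (hb : sbp m b) (hc : sbp m c)
    (h : a + b = c) :
    (∃ i, i < m ∧ a = 2^i ∧ b = 2^i ∧ c = 2^(i+1)) ∨
    (a = 1 ∧ b = 2^m - 1 ∧ c = 2^m) ∨ (a = 2^m - 1 ∧ b = 1 ∧ c = 2^m) := by
  have hN := h8 hm
  rcases ha with ⟨i, hi, rfl⟩ | ha' <;> rcases hb with ⟨j, hj, rfl⟩ | hb' <;>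
    rcases hc with ⟨k, hk, rfl⟩ | hc'
  · obtain ⟨hij, hk'⟩ := A2 h
    subst hij; subst hk'
    exact Or.inl ⟨i, by omega, rfl, rfl, rfl⟩
  · exact absurd (by omega : (2:ℕ)^i + 2^j = 2^m - 1) (A4 hm)
  · subst hb'
    obtain ⟨hi0, hk0⟩ := A6 hm h
    subst hi0; subst hk0
    exact Or.inr (Or.inl ⟨by norm_num, rfl, rfl⟩)
  · subst hb'; subst hc'
    have : (1:ℕ) ≤ 2^i := Nat.one_le_two_pow; omega
  · subst ha'
    have h' : (2:ℕ)^j + (2^m - 1) = 2^k := by omega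
    obtain ⟨hj0, hk0⟩ := A6 hm h'
    subst hj0; subst hk0
    exact Or.inr (Or.inr ⟨rfl, by norm_num, rfl⟩)
  · subst ha'; subst hc'
    have : (1:ℕ) ≤ 2^j := Nat.one_le_two_pow; omega
  · subst ha'; subst hb'; exact absurd h (A8 hm)
  · subst ha'; subst hb'; omega


lemma Fsplit {m k : ℕ} (hm : 3 ≤ m) (h : Fp m k) :
    (sbp m k ∧ 1 ≤ k ∧ k ≤ 2^m) ∨ (2*2^m ≤ k ∧ k < 3*2^m ∧ sbp m (3*2^m - k)) := by
  rcases h with h | h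
  · have := sbp_pos hm h; exact Or.inl ⟨h, this⟩
  · have := sbp_pos hm h
    have hN := h8 hm
    exact Or.inr ⟨by omega, by omega, h⟩

lemma caseXlarge {m : ℕ} (hm : 3 ≤ m) (x y z : ℕ) (hs : x + y + z < 3*2^m)
    (hxL : 2*2^m ≤ x ∧ x < 3*2^m ∧ sbp m (3*2^m - x))
    (hyS : sbp m y) (hzS : sbp m z)
    (h4 : Fp m (x + y)) (h5 : Fp m (y + z)) (h6 : Fp m (x + y + z)) : False := by
  have hN := h8 hm
  obtain ⟨hx1, hx2, hs0⟩ := hxL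
  have hyB := sbp_pos hm hyS
  have hzB := sbp_pos hm hzS
  have hs0B := sbp_pos hm hs0
  -- x + y is large
  rcases Fsplit hm h4 with ⟨_, _, hb⟩ | ⟨_, hxy2, hs1⟩
  · omega
  rcases Fsplit hm h6 with ⟨_, _, hb⟩ | ⟨_, _, hs2⟩
  · omega
  have hs1B := sbp_pos hm hs1
  have hs2B := sbp_pos hm hs2
  -- relations
  have r1 : y + (3*2^m - (x+y)) = 3*2^m - x := by omega
  have r2 : z + (3*2^m - (x+y+z)) = 3*2^m - (x+y) := by omega
  -- y + z small
  rcases Fsplit hm h5 with ⟨hyz, _, _⟩ | ⟨hyz1, _, _⟩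
  · rcases sum2 hm hyS hs1 hs0 r1 with ⟨i, him, hy, hsp, hss⟩ | ⟨hy, hsp, hss⟩ | ⟨hy, hsp, hss⟩
    · rcases sum2 hm hzS hs2 hs1 r2 with ⟨j, hjm, hz, hspp, hsj⟩ | ⟨hz, hspp, hsj⟩ | ⟨hz, hspp, hsj⟩
      · -- 2^i = 2^(j+1), y+z = 3*2^j
        have hij : i = j + 1 := pow_inj (by rw [← hsp, hsj])
        have hyzv : y + z = 3 * 2^j := by
          have : (2:ℕ)^(j+1) = 2*2^j := by rw [pow_succ]; ring
          subst hy; subst hz; omega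
        rcases hyz with ⟨t, _, ht⟩ | ht
        · exact A3 (by omega : 3*2^j = 2^t)
        · exact A5 hm (by omega : 3*2^j = 2^m - 1)
      · -- s1 = 2^i and s1 = 2^m
        have : i = m := pow_inj (by rw [← hsp, hsj])
        omega
      · have : i = m := pow_inj (by rw [← hsp, hsj])
        omega
    · -- s1 = 2^m - 1
      rcases sum2 hm hzS hs2 hs1 r2 with ⟨j, hjm, hz, hspp, hsj⟩ | ⟨hz, hspp, hsj⟩ | ⟨hz, hspp, hsj⟩
      · exact A10' (show 2 ≤ m by omega) (hsj.symm.trans hsp)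
      · omega
      · omega
    · -- s1 = 1
      rcases sum2 hm hzS hs2 hs1 r2 with ⟨j, hjm, hz, hspp, hsj⟩ | ⟨hz, hspp, hsj⟩ | ⟨hz, hspp, hsj⟩
      · have : (2:ℕ)^(j+1) = 2*2^j := by rw [pow_succ]; ring
        have : (1:ℕ) ≤ 2^j := Nat.one_le_two_pow
        omega
      · omega
      · omega
  · -- y + z large: y = z = 2^m, so 3*2^m - x = 2^m + s1 > 2^m, contra
    omega

lemma caseYlarge {m : ℕ} (hm : 3 ≤ m) (x y z : ℕ) (hs : x + y + z < 3*2^m)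
    (hxS : sbp m x) (hzS : sbp m z)
    (hyL : 2*2^m ≤ y ∧ y < 3*2^m ∧ sbp m (3*2^m - y))
    (h4 : Fp m (x + y)) (h5 : Fp m (y + z)) (h6 : Fp m (x + y + z)) : False := by
  have hN := h8 hm
  obtain ⟨hy1, hy2, hsY⟩ := hyL
  have hxB := sbp_pos hm hxS
  have hzB := sbp_pos hm hzS
  have hsYB := sbp_pos hm hsY
  rcases Fsplit hm h4 with ⟨_, _, hb⟩ | ⟨_, _, hs1⟩
  · omega
  rcases Fsplit hm h5 with ⟨_, _, hb⟩ | ⟨_, _, ht1⟩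
  · omega
  rcases Fsplit hm h6 with ⟨_, _, hb⟩ | ⟨_, _, hu⟩
  · omega
  have hs1B := sbp_pos hm hs1
  have ht1B := sbp_pos hm ht1
  have huB := sbp_pos hm hu
  have r1 : x + (3*2^m - (x+y)) = 3*2^m - y := by omega
  have r2 : z + (3*2^m - (y+z)) = 3*2^m - y := by omega
  have r3 : (3*2^m - (x+y)) + (3*2^m - (y+z)) = (3*2^m - y) + (3*2^m - (x+y+z)) := by omega
  have hmsplit : (2:ℕ)^m = 2*2^(m-1) := pow_split1 (by omega)
  have hm4 : (4:ℕ) ≤ 2^(m-1) := by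
    have : (2:ℕ)^2 ≤ 2^(m-1) := pow_le_pow_m (by omega)
    norm_num at this; omega
  rcases sum2 hm hxS hs1 hsY r1 with ⟨i, him, hx, hsp, hss⟩ | ⟨hx, hsp, hss⟩ | ⟨hx, hsp, hss⟩ <;>
    rcases sum2 hm hzS ht1 hsY r2 with ⟨j, hjm, hz, htp, hts⟩ | ⟨hz, htp, hts⟩ | ⟨hz, htp, hts⟩
  · -- u = 0
    have hij : i + 1 = j + 1 := pow_inj (by rw [← hss, hts])
    have e1 : (2:ℕ)^(i+1) = 2*2^i := by rw [pow_succ]; ring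
    omega
  · -- s = 2^(i+1) = 2^m, u = 2^(m-1) - 1
    have him' : i + 1 = m := pow_inj (by rw [← hss, hts])
    have e1 : (2:ℕ)^(i+1) = 2*2^i := by rw [pow_succ]; ring
    have hiv : (2:ℕ)^i = 2^(m-1) := by
      have : i = m - 1 := by omega
      rw [this]
    have huv : 3*2^m - (x+y+z) = 2^(m-1) - 1 := by omega
    rcases hu with ⟨t, _, htt⟩ | htt
    · rw [huv] at htt; exact A10' (show 2 ≤ m - 1 by omega) htt.symm
    · omega
  · -- s' = 2^(i+1) = 2^m, t' = 1 : u + 2^m = 2^(m-1) + 1, contra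
    have him' : i + 1 = m := pow_inj (by rw [← hss, hts])
    have e1 : (2:ℕ)^(i+1) = 2*2^i := by rw [pow_succ]; ring
    have hiv : (2:ℕ)^i = 2^(m-1) := by
      have : i = m - 1 := by omega
      rw [this]
    omega
  · -- x=1 s1=2^m-1, z=t'=2^j with 2^(j+1) = 2^m
    have hjm' : j + 1 = m := pow_inj (by rw [← hts, hss])
    have e1 : (2:ℕ)^(j+1) = 2*2^j := by rw [pow_succ]; ring
    have hjv : (2:ℕ)^j = 2^(m-1) := by
      have : j = m - 1 := by omega
      rw [this]
    have huv : 3*2^m - (x+y+z) = 2^(m-1) - 1 := by omega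
    rcases hu with ⟨t, _, htt⟩ | htt
    · rw [huv] at htt; exact A10' (show 2 ≤ m - 1 by omega) htt.symm
    · omega
  · -- s1 = t1 = 2^m - 1, u = 2^m - 2
    have huv : 3*2^m - (x+y+z) = 2^m - 2 := by omega
    rcases hu with ⟨t, _, htt⟩ | htt
    · rw [huv] at htt; exact A12 hm htt.symm
    · omega
  · omega
  · -- x = 2^m-1, s1 = 1; z=t'=2^j, 2^(j+1)=2^m
    have hjm' : j + 1 = m := pow_inj (by rw [← hts, hss])
    have e1 : (2:ℕ)^(j+1) = 2*2^j := by rw [pow_succ]; ring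
    have hjv : (2:ℕ)^j = 2^(m-1) := by
      have : j = m - 1 := by omega
      rw [this]
    omega
  · omega
  · omega

lemma caseSmall {m : ℕ} (hm : 3 ≤ m) (x y z : ℕ) (hs : x + y + z < 3*2^m)
    (hxS : sbp m x) (hyS : sbp m y) (hzS : sbp m z)
    (h4 : Fp m (x + y)) (h5 : Fp m (y + z)) (h6 : Fp m (x + y + z)) : False := by
  have hN := h8 hm
  have hxB := sbp_pos hm hxS
  have hyB := sbp_pos hm hyS
  have hzB := sbp_pos hm hzS
  rcases Fsplit hm h4 with ⟨hxy, _, hxyB⟩ | ⟨hxy1, _, _⟩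
  · rcases Fsplit hm h5 with ⟨hyz, _, hyzB⟩ | ⟨hyz1, _, _⟩
    · -- both small
      rcases sum2 hm hxS hyS hxy rfl with ⟨i, him, hx, hy, hxyv⟩ | ⟨hx, hy, hxyv⟩ | ⟨hx, hy, hxyv⟩ <;>
        rcases sum2 hm hyS hzS hyz rfl with ⟨j, hjm, hy', hz, hyzv⟩ | ⟨hy', hz, hyzv⟩ | ⟨hy', hz, hyzv⟩
      · -- x=y=z=2^i, sum 3*2^i
        have hij : i = j := pow_inj (by rw [← hy, hy'])
        subst hij
        have hsum : x + y + z = 3 * 2^i := by omega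
        have hile : (2:ℕ)^i ≤ 2^(m-1) := pow_le_pow_m (by omega)
        have hmsplit : (2:ℕ)^m = 2*2^(m-1) := pow_split1 (by omega)
        rcases Fsplit hm h6 with ⟨h6s, _, _⟩ | ⟨h6l, _, _⟩
        · rcases h6s with ⟨t, _, htt⟩ | htt
          · exact A3 (by omega : 3*2^i = 2^t)
          · exact A5 hm (by omega : 3*2^i = 2^m - 1)
        · omega
      · -- y = 2^i and y = 1 : x=y=1, z = 2^m-1, sum = 2^m+1
        rcases Fsplit hm h6 with ⟨_, _, hb⟩ | ⟨hb, _, _⟩ <;> omega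
      · -- y = 2^i = 2^m - 1
        exact A10' (show 2 ≤ m by omega) (hy.symm.trans hy' : (2:ℕ)^i = 2^m - 1)
      · -- x=1,y=2^m-1 ; y = 2^j
        exact A10' (show 2 ≤ m by omega) (hy'.symm.trans hy : (2:ℕ)^j = 2^m - 1)
      · omega
      · -- x=1,y=2^m-1,z=1, sum = 2^m+1
        rcases Fsplit hm h6 with ⟨_, _, hb⟩ | ⟨hb, _, _⟩ <;> omega
      · -- x=2^m-1, y=1 ; y=z=2^j : 2^j = 1, sum = 2^m+1
        have : (1:ℕ) ≤ 2^j := Nat.one_le_two_pow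
        rcases Fsplit hm h6 with ⟨_, _, hb⟩ | ⟨hb, _, _⟩ <;> omega
      · -- x=2^m-1,y=1,z=2^m-1, sum = 2*2^m - 1
        rcases Fsplit hm h6 with ⟨_, _, hb⟩ | ⟨hb, _, _⟩ <;> omega
      · omega
    · -- y + z = 2*2^m : y = z = 2^m ; sum2 x y small
      have hyv : y = 2^m := by omega
      have hzv : z = 2^m := by omega
      rcases sum2 hm hxS hyS hxy rfl with ⟨i, him, hx, hy, hxyv⟩ | ⟨hx, hy, hxyv⟩ | ⟨hx, hy, hxyv⟩
      · have : i = m := pow_inj (by rw [← hy, hyv])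
        omega
      · omega
      · omega
  · -- x + y = 2*2^m : x = y = 2^m
    have hxv : x = 2^m := by omega
    have hyv : y = 2^m := by omega
    rcases Fsplit hm h5 with ⟨hyz, _, hyzB⟩ | ⟨hyz1, _, _⟩
    · rcases sum2 hm hyS hzS hyz rfl with ⟨j, hjm, hy', hz, hyzv⟩ | ⟨hy', hz, hyzv⟩ | ⟨hy', hz, hyzv⟩
      · have : j = m := pow_inj (by rw [← hy', hyv])
        omega
      · omega
      · omega
    · omega

lemma noK4 {m : ℕ} (hm : 3 ≤ m) (x y z : ℕ)
    (hx : 0 < x) (hy : 0 < y) (hz : 0 < z) (hs : x + y + z < 3*2^m)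
    (h1 : Fp m x) (h2 : Fp m y) (h3 : Fp m z)
    (h4 : Fp m (x + y)) (h5 : Fp m (y + z)) (h6 : Fp m (x + y + z)) : False := by
  have hN := h8 hm
  rcases Fsplit hm h1 with ⟨hx1, _, _⟩ | hx1 <;>
    rcases Fsplit hm h2 with ⟨hy1, _, _⟩ | hy1 <;>
      rcases Fsplit hm h3 with ⟨hz1, _, _⟩ | hz1
  · exact caseSmall hm x y z hs hx1 hy1 hz1 h4 h5 h6
  · -- z large
    refine caseXlarge hm z y x (by omega) hz1 hy1 hx1 ?_ ?_ ?_
    · rw [show z + y = y + z from by omega]; exact h5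
    · rw [show y + x = x + y from by omega]; exact h4
    · rw [show z + y + x = x + y + z from by omega]; exact h6
  · exact caseYlarge hm x y z hs hx1 hz1 hy1 h4 h5 h6
  · omega
  · exact caseXlarge hm x y z hs hx1 hy1 hz1 h4 h5 h6
  · omega
  · omega
  · omega

section ZModPart

variable {m n : ℕ}

def good0 (m n : ℕ) (t : ZMod n) : Prop := sbp m t.val ∨ sbp m (n - t.val)

lemma val_inj' [NeZero n] {a b : ZMod n} (h : a.val = b.val) : a = b := by
  calc a = ((a.val : ℕ) : ZMod n) := (ZMod.natCast_rightInverse a).symm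
  _ = ((b.val : ℕ) : ZMod n) := by rw [h]
  _ = b := ZMod.natCast_rightInverse b

lemma valFact [NeZero n] {k : ℕ} (hk : k < n) : ((k : ZMod n)).val = k := by
  rw [ZMod.val_natCast]; exact Nat.mod_eq_of_lt hk

lemma val_pos' [NeZero n] {t : ZMod n} (ht : t ≠ 0) : 0 < t.val := by
  rcases Nat.eq_zero_or_pos t.val with h | h
  · exact absurd ((ZMod.val_eq_zero t).mp h) ht
  · exact h

lemma sub_val [NeZero n] {a b : ZMod n} (hab : a.val ≤ b.val) :
    (b - a).val = b.val - a.val := by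
  have hb : b.val < n := ZMod.val_lt b
  have ha' : ((a.val : ℕ) : ZMod n) = a := ZMod.natCast_rightInverse a
  have hb' : ((b.val : ℕ) : ZMod n) = b := ZMod.natCast_rightInverse b
  have : b - a = ((b.val - a.val : ℕ) : ZMod n) := by
    rw [Nat.cast_sub hab, ha', hb']
  rw [this, valFact (by omega)]

lemma good0_neg (hm : 3 ≤ m) [NeZero n] {t : ZMod n} (ht : t ≠ 0)
    (h : good0 m n t) : good0 m n (-t) := by
  have hvl : t.val < n := ZMod.val_lt t
  have hv0 : 0 < t.val := val_pos' ht
  have hv : (-t).val = n - t.val := by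
    rw [ZMod.neg_val]; simp [ht]
  unfold good0 at h ⊢
  rw [hv, show n - (n - t.val) = t.val from by omega]
  tauto

lemma good0_cast (hm : 3 ≤ m) (hn : n = 3 * 2^m) [NeZero n] {k : ℕ} (h : sbp m k) :
    good0 m n ((k : ZMod n)) := by
  have := sbp_pos hm h
  have hN := h8 hm
  left
  rw [valFact (by omega)]
  exact h

lemma cast_ne_zero' (hn : n = 3 * 2^m) [NeZero n] {k : ℕ} (h1 : 0 < k) (h2 : k < n) :
    (k : ZMod n) ≠ 0 := by
  intro h
  have := valFact (n := n) h2
  rw [h, ZMod.val_zero] at this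
  omega

lemma mem_Sb_iff (Sb : Finset ℕ)
    (hSb : Sb = (Finset.range (m + 1)).image (fun i => 2 ^ i) ∪ {2 ^ m - 1}) (k : ℕ) :
    k ∈ Sb ↔ sbp m k := by
  subst hSb
  simp only [Finset.mem_union, Finset.mem_image, Finset.mem_range, Finset.mem_singleton, sbp]
  constructor
  · rintro (⟨i, hi, rfl⟩ | h)
    · exact Or.inl ⟨i, by omega, rfl⟩
    · exact Or.inr h
  · rintro (⟨i, hi, rfl⟩ | h)
    · exact Or.inl ⟨i, by omega, rfl⟩
    · exact Or.inr h

lemma sbp_min_iff (hm : 3 ≤ m) (hn : n = 3 * 2^m) {k : ℕ} (h1 : 1 ≤ k) (h2 : k < n) :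
    sbp m (min k (n - k)) ↔ (sbp m k ∨ sbp m (n - k)) := by
  have hN := h8 hm
  constructor
  · intro h
    rcases Nat.le_total k (n - k) with hle | hle
    · rw [min_eq_left hle] at h; exact Or.inl h
    · rw [min_eq_right hle] at h; exact Or.inr h
  · intro h
    rcases h with h | h
    · have := sbp_pos hm h
      rw [min_eq_left (by omega)]; exact h
    · have := sbp_pos hm h
      rw [min_eq_right (by omega)]; exact h

lemma notAdj_iff (hm : 3 ≤ m) (hn : n = 3 * 2^m) [NeZero n] (Sb S : Finset ℕ)
    (hSb : Sb = (Finset.range (m + 1)).image (fun i => 2 ^ i) ∪ {2 ^ m - 1})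
    (hS : S = Finset.Icc 1 (n / 2) \ Sb) {x y : ZMod n} (hxy : x ≠ y) :
    ¬ (circulant n S).Adj x y ↔ good0 m n (y - x) := by
  have hN := h8 hm
  have hyx : y - x ≠ 0 := sub_ne_zero.mpr (Ne.symm hxy)
  have hk1 : 0 < (y - x).val := val_pos' hyx
  have hk2 : (y - x).val < n := ZMod.val_lt _
  have hxyval : (x - y).val = n - (y - x).val := by
    have he : x - y = -(y - x) := by ring
    rw [he, ZMod.neg_val]; simp [hyx]
  have hred : redAbs n (x - y) = redAbs n (y - x) := by
    unfold redAbs; rw [hxyval]; omega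
  unfold circulant
  rw [SimpleGraph.fromRel_adj, hred]
  have hmem : redAbs n (y - x) ∈ S ↔ ¬ sbp m (redAbs n (y - x)) := by
    rw [hS, Finset.mem_sdiff, Finset.mem_Icc, ← mem_Sb_iff Sb hSb]
    unfold redAbs
    constructor
    · rintro ⟨_, h⟩; exact h
    · intro h
      refine ⟨⟨?_, ?_⟩, h⟩ <;> omega
  have hiff := sbp_min_iff hm hn (k := (y - x).val) (by omega) hk2
  unfold redAbs at hmem hiff
  constructor
  · intro h
    have h2 : ¬ (min (y - x).val (n - (y - x).val) ∈ S) := by tauto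
    rw [hmem] at h2
    have h3 : sbp m (min (y - x).val (n - (y - x).val)) := not_not.mp h2
    exact hiff.mp h3
  · intro h hadj
    obtain ⟨_, h2⟩ := hadj
    have h2' : min (y - x).val (n - (y - x).val) ∈ S := by tauto
    rw [hmem] at h2'
    exact h2' (hiff.mpr h)

lemma indep_iff (hm : 3 ≤ m) (hn : n = 3 * 2^m) [NeZero n] (Sb S : Finset ℕ)
    (hSb : Sb = (Finset.range (m + 1)).image (fun i => 2 ^ i) ∪ {2 ^ m - 1})
    (hS : S = Finset.Icc 1 (n / 2) \ Sb) (s : Finset (ZMod n)) :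
    IsIndep S s ↔ ∀ x ∈ s, ∀ y ∈ s, x ≠ y → good0 m n (y - x) := by
  unfold IsIndep
  constructor
  · intro h x hx y hy hxy
    exact (notAdj_iff hm hn Sb S hSb hS hxy).mp (h x hx y hy hxy)
  · intro h x hx y hy hxy
    exact (notAdj_iff hm hn Sb S hSb hS hxy).mpr (h x hx y hy hxy)

lemma core (hm : 3 ≤ m) (hn : n = 3 * 2^m) [NeZero n] (u v w : ZMod n) (hu0 : u ≠ 0)
    (h1 : u.val < v.val) (h2 : v.val < w.val)
    (gu : good0 m n u) (gv : good0 m n v) (gw : good0 m n w)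
    (guv : good0 m n (v - u)) (gvw : good0 m n (w - v)) (guw : good0 m n (w - u)) : False := by
  subst hn
  have hp : 0 < u.val := val_pos' hu0
  have hr : w.val < 3 * 2^m := ZMod.val_lt w
  have e1 : (v - u).val = v.val - u.val := sub_val (le_of_lt h1)
  have e2 : (w - v).val = w.val - v.val := sub_val (le_of_lt h2)
  have e3 : (w - u).val = w.val - u.val := sub_val (by omega)
  refine noK4 hm u.val (v.val - u.val) (w.val - v.val) (by omega) (by omega) (by omega)
    (by omega) ?_ ?_ ?_ ?_ ?_ ?_
  · exact gu
  · rw [← e1]; exact guv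
  · rw [← e2]; exact gvw
  · rw [show u.val + (v.val - u.val) = v.val from by omega]; exact gv
  · rw [show (v.val - u.val) + (w.val - v.val) = w.val - u.val from by omega, ← e3]; exact guw
  · rw [show u.val + (v.val - u.val) + (w.val - v.val) = w.val from by omega]; exact gw

lemma triple (hm : 3 ≤ m) (hn : n = 3 * 2^m) [NeZero n] (x : ZMod n) :
    (∀ p ∈ ({x, x + ((2^m - 1 : ℕ) : ZMod n), x + ((2^m : ℕ) : ZMod n)} : Finset (ZMod n)),
      ∀ q ∈ ({x, x + ((2^m - 1 : ℕ) : ZMod n), x + ((2^m : ℕ) : ZMod n)} : Finset (ZMod n)),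
        p ≠ q → good0 m n (q - p)) ∧
    ({x, x + ((2^m - 1 : ℕ) : ZMod n), x + ((2^m : ℕ) : ZMod n)} : Finset (ZMod n)).card = 3 := by
  have hN := h8 hm
  set a : ZMod n := ((2^m - 1 : ℕ) : ZMod n) with ha
  set b : ZMod n := ((2^m : ℕ) : ZMod n) with hb
  have sba : sbp m (2^m - 1) := Or.inr rfl
  have sbb : sbp m (2^m) := Or.inl ⟨m, le_refl m, rfl⟩
  have sb1 : sbp m 1 := Or.inl ⟨0, by omega, by norm_num⟩
  have ga : good0 m n a := good0_cast hm hn sba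
  have gb : good0 m n b := good0_cast hm hn sbb
  have hba : b - a = ((1:ℕ) : ZMod n) := by
    rw [ha, hb, ← Nat.cast_sub (by omega)]
    congr 1; omega
  have gba : good0 m n (b - a) := by rw [hba]; exact good0_cast hm hn sb1
  have ha0 : a ≠ 0 := cast_ne_zero' hn (by omega) (by omega)
  have hb0 : b ≠ 0 := cast_ne_zero' hn (by omega) (by omega)
  have hba0 : b - a ≠ 0 := by rw [hba]; exact cast_ne_zero' hn (by omega) (by omega)
  have hab : a ≠ b := fun h => hba0 (by rw [h, sub_self])
  have ga' : good0 m n (-a) := good0_neg hm ha0 ga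
  have gb' : good0 m n (-b) := good0_neg hm hb0 gb
  have gab : good0 m n (a - b) := by
    rw [show a - b = -(b - a) from by ring]; exact good0_neg hm hba0 gba
  constructor
  · intro p hp q hq hpq
    simp only [Finset.mem_insert, Finset.mem_singleton] at hp hq
    rcases hp with rfl | rfl | rfl <;> rcases hq with rfl | rfl | rfl
    all_goals first
      | (exact absurd rfl hpq)
      | (rw [show p + a - p = a from by ring]; exact ga)
      | (rw [show p + b - p = b from by ring]; exact gb)
      | (rw [show q - (q + a) = -a from by ring]; exact ga')
      | (rw [show q - (q + b) = -b from by ring]; exact gb')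
      | (rw [show x + b - (x + a) = b - a from by ring]; exact gba)
      | (rw [show x + a - (x + b) = a - b from by ring]; exact gab)
  · refine Finset.card_eq_three.mpr ⟨x, x + a, x + b, ?_, ?_, ?_, rfl⟩
    · intro h; exact ha0 (left_eq_add.mp h)
    · intro h; exact hb0 (left_eq_add.mp h)
    · intro h; exact hab ((add_right_inj x).mp h)

lemma extend (hm : 3 ≤ m) (hn : n = 3 * 2^m) [NeZero n] (s : Finset (ZMod n))
    (hcard : s.card ≤ 2)
    (hg : ∀ x ∈ s, ∀ y ∈ s, x ≠ y → good0 m n (y - x)) :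
    ∃ z, z ∉ s ∧ ∀ x ∈ insert z s, ∀ y ∈ insert z s, x ≠ y → good0 m n (y - x) := by
  have hN := h8 hm
  rcases (show s.card = 0 ∨ s.card = 1 ∨ s.card = 2 by omega) with h | h | h
  · have hs : s = ∅ := Finset.card_eq_zero.mp h
    subst hs
    refine ⟨0, by simp, ?_⟩
    intro p hp q hq hpq
    simp only [Finset.mem_insert, Finset.notMem_empty, or_false] at hp hq
    subst hp; subst hq; exact absurd rfl hpq
  · obtain ⟨x, hs⟩ := Finset.card_eq_one.mp h
    subst hs
    set b : ZMod n := ((2^m : ℕ) : ZMod n) with hbdef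
    have sbb : sbp m (2^m) := Or.inl ⟨m, le_refl m, rfl⟩
    have gb : good0 m n b := good0_cast hm hn sbb
    have hb0 : b ≠ 0 := cast_ne_zero' hn (by omega) (by omega)
    have gb' : good0 m n (-b) := good0_neg hm hb0 gb
    refine ⟨x + b, ?_, ?_⟩
    · rw [Finset.mem_singleton]
      intro h'
      exact hb0 (by rw [← add_sub_cancel_left x b, h', sub_self])
    · intro p hp q hq hpq
      simp only [Finset.mem_insert, Finset.mem_singleton] at hp hq
      rcases hp with rfl | rfl <;> rcases hq with rfl | rfl
      · exact absurd rfl hpq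
      · rw [show q - (q + b) = -b from by ring]; exact gb'
      · rw [show p + b - p = b from by ring]; exact gb
      · exact absurd rfl hpq
  · obtain ⟨x0, y0, hxy0, hs⟩ := Finset.card_eq_two.mp h
    obtain ⟨x', y', hxy', hseq, hd⟩ :
        ∃ x' y', x' ≠ y' ∧ s = {x', y'} ∧ sbp m ((y' - x').val) := by
      have hx0 : x0 ∈ s := by rw [hs]; simp
      have hy0 : y0 ∈ s := by rw [hs]; simp
      rcases hg x0 hx0 y0 hy0 hxy0 with hgood | hgood
      · exact ⟨x0, y0, hxy0, hs, hgood⟩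
      · refine ⟨y0, x0, hxy0.symm, by rw [hs, Finset.pair_comm], ?_⟩
        have hne : y0 - x0 ≠ 0 := sub_ne_zero.mpr hxy0.symm
        have hval : (x0 - y0).val = n - (y0 - x0).val := by
          rw [show x0 - y0 = -(y0 - x0) from by ring, ZMod.neg_val]
          simp [hne]
        rw [hval]; exact hgood
    have hd' := sbp_pos hm hd
    have hy'x' : (((y' - x').val : ℕ) : ZMod n) = y' - x' := ZMod.natCast_rightInverse _
    have sb1 : sbp m 1 := Or.inl ⟨0, by omega, by norm_num⟩
    have claim : ∃ e : ℕ, sbp m e ∧ good0 m n ((x' + ((e : ℕ) : ZMod n)) - y') ∧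
        (x' + ((e : ℕ) : ZMod n)) ≠ y' := by
      rcases hd with ⟨i, hi, hdv⟩ | hdv
      · rcases eq_or_lt_of_le hi with him | him
        · -- i = m : d = 2^m, take e = 2^m - 1, diff = -1
          have hdiff : (x' + ((2^m - 1 : ℕ) : ZMod n)) - y' = -(((1:ℕ)) : ZMod n) := by
            rw [show (x' + ((2^m - 1 : ℕ) : ZMod n)) - y'
                  = ((2^m - 1 : ℕ) : ZMod n) - (y' - x') from by ring, ← hy'x', hdv, him,
                show ((2^m - 1 : ℕ) : ZMod n) - ((2^m : ℕ) : ZMod n)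
                  = -(((2^m : ℕ) : ZMod n) - ((2^m - 1 : ℕ) : ZMod n)) from by ring,
                ← Nat.cast_sub (show (2:ℕ)^m - 1 ≤ 2^m from by omega),
                show (2:ℕ)^m - (2^m - 1) = 1 from by omega]
          refine ⟨2^m - 1, Or.inr rfl, ?_, ?_⟩
          · rw [hdiff]
            exact good0_neg hm (cast_ne_zero' hn (by omega) (by omega))
              (good0_cast hm hn sb1)
          · intro h'
            have h0 : (x' + ((2^m - 1 : ℕ) : ZMod n)) - y' = 0 := by rw [h', sub_self]
            rw [hdiff] at h0
            exact (cast_ne_zero' hn (k := 1) (by omega) (by omega)) (neg_eq_zero.mp h0)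
        · -- i < m : take e = 2^(i+1), diff = 2^i
          have he2 : (2:ℕ)^(i+1) = 2 * 2^i := by rw [pow_succ]; ring
          have hile : (2:ℕ)^(i+1) ≤ 2^m := pow_le_pow_m (by omega)
          have hipos : (1:ℕ) ≤ 2^i := Nat.one_le_two_pow
          refine ⟨2^(i+1), Or.inl ⟨i+1, by omega, rfl⟩, ?_, ?_⟩
          · have hdiff : (x' + ((2^(i+1) : ℕ) : ZMod n)) - y' = ((2^i : ℕ) : ZMod n) := by
              rw [show (x' + ((2^(i+1) : ℕ) : ZMod n)) - y'
                    = ((2^(i+1) : ℕ) : ZMod n) - (y' - x') from by ring, ← hy'x', hdv,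
                  ← Nat.cast_sub (by omega)]
              congr 1
              omega
            rw [hdiff]
            exact good0_cast hm hn (Or.inl ⟨i, by omega, rfl⟩)
          · have hdiff : (x' + ((2^(i+1) : ℕ) : ZMod n)) - y' = ((2^i : ℕ) : ZMod n) := by
              rw [show (x' + ((2^(i+1) : ℕ) : ZMod n)) - y'
                    = ((2^(i+1) : ℕ) : ZMod n) - (y' - x') from by ring, ← hy'x', hdv,
                  ← Nat.cast_sub (by omega)]
              congr 1
              omega
            intro h'
            have h0 : (x' + ((2^(i+1) : ℕ) : ZMod n)) - y' = 0 := by rw [h', sub_self]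
            rw [hdiff] at h0
            exact (cast_ne_zero' hn (k := 2^i) (by omega)
              (by have := pow_le_pow_m (show i ≤ m by omega); omega)) h0
      · -- d = 2^m - 1 : take e = 2^m, diff = 1
        refine ⟨2^m, Or.inl ⟨m, le_refl m, rfl⟩, ?_, ?_⟩
        · have hdiff : (x' + ((2^m : ℕ) : ZMod n)) - y' = ((1:ℕ) : ZMod n) := by
            rw [show (x' + ((2^m : ℕ) : ZMod n)) - y'
                  = ((2^m : ℕ) : ZMod n) - (y' - x') from by ring, ← hy'x', hdv,
                ← Nat.cast_sub (by omega)]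
            congr 1
            omega
          rw [hdiff]
          exact good0_cast hm hn sb1
        · have hdiff : (x' + ((2^m : ℕ) : ZMod n)) - y' = ((1:ℕ) : ZMod n) := by
            rw [show (x' + ((2^m : ℕ) : ZMod n)) - y'
                  = ((2^m : ℕ) : ZMod n) - (y' - x') from by ring, ← hy'x', hdv,
                ← Nat.cast_sub (by omega)]
            congr 1
            omega
          intro h'
          have h0 : (x' + ((2^m : ℕ) : ZMod n)) - y' = 0 := by rw [h', sub_self]
          rw [hdiff] at h0
          exact (cast_ne_zero' hn (k := 1) (by omega) (by omega)) h0
    obtain ⟨e, hesb, hezy, hezyne⟩ := claim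
    have heB := sbp_pos hm hesb
    set z := x' + ((e : ℕ) : ZMod n) with hz
    have hzx : z - x' = ((e : ℕ) : ZMod n) := by rw [hz]; ring
    have hzx0 : z ≠ x' := by
      intro h'
      have h0 : z - x' = 0 := by rw [h', sub_self]
      rw [hzx] at h0
      exact (cast_ne_zero' hn (by omega) (by omega)) h0
    have gzx : good0 m n (z - x') := by rw [hzx]; exact good0_cast hm hn hesb
    have gxz : good0 m n (x' - z) := by
      rw [show x' - z = -(z - x') from by ring]
      exact good0_neg hm (sub_ne_zero.mpr hzx0) gzx
    have gyz : good0 m n (y' - z) := by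
      rw [show y' - z = -(z - y') from by ring]
      exact good0_neg hm (sub_ne_zero.mpr hezyne) hezy
    have gxy : good0 m n (y' - x') := Or.inl hd
    have gyx : good0 m n (x' - y') := by
      rw [show x' - y' = -(y' - x') from by ring]
      exact good0_neg hm (sub_ne_zero.mpr hxy'.symm) gxy
    refine ⟨z, ?_, ?_⟩
    · rw [hseq, Finset.mem_insert, Finset.mem_singleton]
      push_neg
      exact ⟨hzx0, hezyne⟩
    · intro p hp q hq hpq
      rw [hseq] at hp hq
      simp only [Finset.mem_insert, Finset.mem_singleton] at hp hq
      rcases hp with rfl | rfl | rfl <;> rcases hq with rfl | rfl | rfl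
      · exact absurd rfl hpq
      · exact gxz
      · exact gyz
      · exact gzx
      · exact absurd rfl hpq
      · exact gxy
      · exact hezy
      · exact gyx
      · exact absurd rfl hpq

lemma no_four (hm : 3 ≤ m) (hn : n = 3 * 2^m) [NeZero n] (s : Finset (ZMod n))
    (hg : ∀ x ∈ s, ∀ y ∈ s, x ≠ y → good0 m n (y - x)) : s.card ≤ 3 := by
  by_contra hcc
  push_neg at hcc
  obtain ⟨a, ha⟩ := Finset.card_pos.mp (show 0 < s.card by omega)
  obtain ⟨b, hb1⟩ := Finset.card_pos.mp (show 0 < (s.erase a).card by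
    rw [Finset.card_erase_of_mem ha]; omega)
  have hb : b ∈ s := Finset.mem_of_mem_erase hb1
  have hba : b ≠ a := Finset.ne_of_mem_erase hb1
  obtain ⟨c, hc1⟩ := Finset.card_pos.mp (show 0 < ((s.erase a).erase b).card by
    rw [Finset.card_erase_of_mem hb1, Finset.card_erase_of_mem ha]; omega)
  have hcb : c ≠ b := Finset.ne_of_mem_erase hc1
  have hc2 := Finset.mem_of_mem_erase hc1
  have hca : c ≠ a := Finset.ne_of_mem_erase hc2
  have hcs : c ∈ s := Finset.mem_of_mem_erase hc2
  obtain ⟨d, hd1⟩ := Finset.card_pos.mp (show 0 < (((s.erase a).erase b).erase c).card by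
    rw [Finset.card_erase_of_mem hc1, Finset.card_erase_of_mem hb1,
      Finset.card_erase_of_mem ha]; omega)
  have hdc : d ≠ c := Finset.ne_of_mem_erase hd1
  have hd2 := Finset.mem_of_mem_erase hd1
  have hdb : d ≠ b := Finset.ne_of_mem_erase hd2
  have hd3 := Finset.mem_of_mem_erase hd2
  have hda : d ≠ a := Finset.ne_of_mem_erase hd3
  have hds : d ∈ s := Finset.mem_of_mem_erase hd3
  set u := b - a with hu
  set v := c - a with hv
  set w := d - a with hw
  have hu0 : u ≠ 0 := sub_ne_zero.mpr hba
  have hv0 : v ≠ 0 := sub_ne_zero.mpr hca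
  have hw0 : w ≠ 0 := sub_ne_zero.mpr hda
  have huv : u ≠ v := fun h => hcb (sub_left_inj.mp h).symm
  have huw : u ≠ w := fun h => hdb (sub_left_inj.mp h).symm
  have hvw : v ≠ w := fun h => hdc (sub_left_inj.mp h).symm
  have gu : good0 m n u := hg a ha b hb (Ne.symm hba)
  have gv : good0 m n v := hg a ha c hcs (Ne.symm hca)
  have gw : good0 m n w := hg a ha d hds (Ne.symm hda)
  have guv : good0 m n (v - u) := by
    rw [show v - u = c - b from by rw [hu, hv]; ring]
    exact hg b hb c hcs (Ne.symm hcb)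
  have gvw : good0 m n (w - v) := by
    rw [show w - v = d - c from by rw [hv, hw]; ring]
    exact hg c hcs d hds (Ne.symm hdc)
  have guw : good0 m n (w - u) := by
    rw [show w - u = d - b from by rw [hu, hw]; ring]
    exact hg b hb d hds (Ne.symm hdb)
  have gvu : good0 m n (u - v) := by
    rw [show u - v = -(v - u) from by ring]
    exact good0_neg hm (sub_ne_zero.mpr (Ne.symm huv)) guv
  have gwv : good0 m n (v - w) := by
    rw [show v - w = -(w - v) from by ring]
    exact good0_neg hm (sub_ne_zero.mpr (Ne.symm hvw)) gvw
  have gwu : good0 m n (u - w) := by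
    rw [show u - w = -(w - u) from by ring]
    exact good0_neg hm (sub_ne_zero.mpr (Ne.symm huw)) guw
  have nuv : u.val ≠ v.val := fun h => huv (val_inj' h)
  have nuw : u.val ≠ w.val := fun h => huw (val_inj' h)
  have nvw : v.val ≠ w.val := fun h => hvw (val_inj' h)
  rcases Ne.lt_or_gt nuv with h1 | h1
  · rcases Ne.lt_or_gt nvw with h2 | h2
    · exact core hm hn u v w hu0 h1 h2 gu gv gw guv gvw guw
    · rcases Ne.lt_or_gt nuw with h3 | h3
      · exact core hm hn u w v hu0 h3 h2 gu gw gv guw gwv guv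
      · exact core hm hn w u v hw0 h3 h1 gw gu gv gwu guv gwv
  · rcases Ne.lt_or_gt nuw with h2 | h2
    · exact core hm hn v u w hv0 h1 h2 gv gu gw gvu guw gvw
    · rcases Ne.lt_or_gt nvw with h3 | h3
      · exact core hm hn v w u hv0 h3 h2 gv gw gu gvw gwu gvu
      · exact core hm hn w v u hw0 h3 h1 gw gv gu gwv gvu gwu


end ZModPart

end PFaux


theorem power_family_pure (m n : ℕ) (hm : 3 ≤ m) (hn : n = 3 * 2 ^ m)
    (Sb S : Finset ℕ)
    (hSb : Sb = (Finset.range (m + 1)).image (fun i => 2 ^ i) ∪ {2 ^ m - 1})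
    (hS : S = Finset.Icc 1 (n / 2) \ Sb) :
    (∃ s : Finset (ZMod n), IsIndep S s ∧ s.card = 3) ∧
    (∀ s : Finset (ZMod n), IsMaxIndep S s → s.card = 3) := by
  haveI : NeZero n := ⟨by rw [hn]; positivity⟩
  constructor
  · obtain ⟨hpair, hcard⟩ := PFaux.triple hm hn (0 : ZMod n)
    refine ⟨_, ?_, hcard⟩
    rw [PFaux.indep_iff hm hn Sb S hSb hS]
    exact hpair
  · rintro s ⟨hind, hmax⟩
    have hg := (PFaux.indep_iff hm hn Sb S hSb hS s).mp hind
    have hle := PFaux.no_four hm hn s hg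
    by_contra hne
    have hc2 : s.card ≤ 2 := by omega
    obtain ⟨z, hz, hgood⟩ := PFaux.extend hm hn s hc2 hg
    have hins : IsIndep S (insert z s) := (PFaux.indep_iff hm hn Sb S hSb hS _).mpr hgood
    have hins2 := hmax (insert z s) hins (Finset.subset_insert z s)
    exact hz (by rw [← hins2]; exact Finset.mem_insert_self z s)
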